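/- Let N be a lattice with dual M, A := ℤ[N]⊗_ℤΛ^* M, l_1(z^n⊗α) := z^n⊗ι_n(α), and let [·,·] be the Schouten–Nijenhuis bracket. Then the failure of l_1 to be a derivation is measured by the Schouten–Nijenhuis bracket: for all homogeneous a, b ∈ A, l_1(a·b) = l_1(a)·b + (−1)^{deg a}·a·l_1(b) + (−1)^{deg a − 1}·[a, b]. Equivalently, the bracket canonically associated to the BV-operator l_1, namely (a,b) ↦ (−1)^{deg a}·l_1(ab) − (−1)^{deg a}·l_1(a)·b − a·l_1(b), equals −[a, b]. -/

import Mathlib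

set_option synthInstance.maxHeartbeats 1000000
set_option maxHeartbeats 1000000

open Module

/-- Contraction `ι_n` on `Λ^* M`, `M := Hom(N, ℤ)`, by a lattice element `n ∈ N`. -/
noncomputable def ctr {N : Type} [AddCommGroup N] (n : N) :
    ExteriorAlgebra ℤ (Module.Dual ℤ N) →ₗ[ℤ] ExteriorAlgebra ℤ (Module.Dual ℤ N) :=
  CliffordAlgebra.contractLeft (Module.Dual.eval ℤ N n)

/-- The operator `l_1` on `A = ℤ[N] ⊗ Λ^* M`: `l_1(z^n ⊗ α) = z^n ⊗ ι_n(α)`. -/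
noncomputable def lOne {N : Type} [AddCommGroup N]
    (x : AddMonoidAlgebra (ExteriorAlgebra ℤ (Module.Dual ℤ N)) N) :
    AddMonoidAlgebra (ExteriorAlgebra ℤ (Module.Dual ℤ N)) N :=
  Finsupp.sum x.coeff fun n a => AddMonoidAlgebra.single n (ctr n a)

/-- The Schouten–Nijenhuis bracket of homogeneous elements `z^{na}⊗αa`, `z^{nb}⊗αb`
(with `αa ∈ Λ^{da} M`):
`[z^{na}⊗αa, z^{nb}⊗αb] = (−1)^{da−1} z^{na+nb}⊗(ι_{nb}(αa)∧αb + (−1)^{da} αa∧ι_{na}(αb))`. -/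
noncomputable def snBracket {N : Type} [AddCommGroup N]
    (na nb : N) (da : ℕ) (αa αb : ExteriorAlgebra ℤ (Module.Dual ℤ N)) :
    AddMonoidAlgebra (ExteriorAlgebra ℤ (Module.Dual ℤ N)) N :=
  ((-1 : ℤ) ^ (da + 1)) • AddMonoidAlgebra.single (na + nb)
    (ctr nb αa * αb + ((-1 : ℤ) ^ da) • (αa * ctr na αb))

lemma ctr_mul_of_mem {N : Type} [AddCommGroup N] (n : N) (da : ℕ)
    (αa : ExteriorAlgebra ℤ (Module.Dual ℤ N))
    (hαa : αa ∈ ⋀[ℤ]^da (Module.Dual ℤ N))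
    (β : ExteriorAlgebra ℤ (Module.Dual ℤ N)) :
    ctr n (αa * β) = ctr n αa * β + ((-1 : ℤ) ^ da) • (αa * ctr n β) := by
  induction hαa using Submodule.pow_induction_on_left' with
  | algebraMap r =>
      simp only [ctr, pow_zero, one_smul]
      rw [CliffordAlgebra.contractLeft_algebraMap_mul, CliffordAlgebra.contractLeft_algebraMap,
        zero_mul, zero_add]
  | add x y i hx hy ihx ihy =>
      simp only [add_mul, map_add, ihx, ihy, smul_add]
      abel
  | mem_mul m hm i x hx ih =>
      obtain ⟨v, rfl⟩ := hm
      have key : ∀ c : ExteriorAlgebra ℤ (Module.Dual ℤ N),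
          ctr n (ExteriorAlgebra.ι ℤ v * c)
            = (Module.Dual.eval ℤ N n) v • c - ExteriorAlgebra.ι ℤ v * ctr n c := by
        intro c
        simpa [ExteriorAlgebra.ι, ctr] using
          CliffordAlgebra.contractLeft_ι_mul (Module.Dual.eval ℤ N n) v c
      rw [mul_assoc, key, key, ih]
      simp only [mul_add, sub_mul, smul_mul_assoc, mul_smul_comm, mul_assoc, pow_succ,
        mul_neg_one, neg_smul, smul_sub]
      module

lemma smul_single_aux {N : Type} [AddCommGroup N] (c : ℤ) (n : N)
    (x : ExteriorAlgebra ℤ (Module.Dual ℤ N)) :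
    c • (AddMonoidAlgebra.single n x :
        AddMonoidAlgebra (ExteriorAlgebra ℤ (Module.Dual ℤ N)) N)
      = AddMonoidAlgebra.single n (c • x) := by
  rw [zsmul_eq_mul, AddMonoidAlgebra.intCast_def, AddMonoidAlgebra.single_mul_single,
    zero_add, ← zsmul_eq_mul]

lemma lOne_single {N : Type} [AddCommGroup N] (n : N)
    (α : ExteriorAlgebra ℤ (Module.Dual ℤ N)) :
    lOne (AddMonoidAlgebra.single n α) = AddMonoidAlgebra.single n (ctr n α) := by
  unfold lOne
  rw [AddMonoidAlgebra.coeff_single, Finsupp.sum_single_index]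
  simp

/-- **Proposition `BVprop` (second half, equation (DerivationFail)).**
The failure of `l_1` to be a derivation is measured by the Schouten–Nijenhuis bracket:
for all homogeneous `a, b ∈ A`,
`l_1(ab) = l_1(a)b + (−1)^{deg a} a l_1(b) + (−1)^{deg a − 1}[a, b]`;
equivalently, the bracket canonically associated to the BV-operator `l_1`, namely
`(−1)^{deg a} l_1(ab) − (−1)^{deg a} l_1(a)b − a l_1(b)`, equals `−[a, b]`. -/
theorem bv_bracket_is_schouten (N : Type) [AddCommGroup N] [Module.Free ℤ N]
    [Module.Finite ℤ N]
    (na nb : N) (da db : ℕ) (αa αb : ExteriorAlgebra ℤ (Module.Dual ℤ N))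
    (hαa : αa ∈ ⋀[ℤ]^da (Module.Dual ℤ N)) (hαb : αb ∈ ⋀[ℤ]^db (Module.Dual ℤ N))
    (a b : AddMonoidAlgebra (ExteriorAlgebra ℤ (Module.Dual ℤ N)) N)
    (ha : a = AddMonoidAlgebra.single na αa) (hb : b = AddMonoidAlgebra.single nb αb) :
    lOne (a * b) =
      lOne a * b + ((-1 : ℤ) ^ da) • (a * lOne b) +
        ((-1 : ℤ) ^ (da + 1)) • snBracket na nb da αa αb ∧
    ((-1 : ℤ) ^ da) • lOne (a * b) - ((-1 : ℤ) ^ da) • (lOne a * b) - a * lOne b =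
      -snBracket na nb da αa αb := by
  subst ha hb
  have hmul : AddMonoidAlgebra.single na αa * AddMonoidAlgebra.single nb αb
      = AddMonoidAlgebra.single (na + nb) (αa * αb) :=
    AddMonoidAlgebra.single_mul_single na nb αa αb
  have hctr_add : ctr (na + nb) (αa * αb) = ctr na (αa * αb) + ctr nb (αa * αb) := by
    simp [ctr, map_add]
  have e1 : ctr na (αa * αb) = ctr na αa * αb + ((-1 : ℤ) ^ da) • (αa * ctr na αb) :=
    ctr_mul_of_mem na da αa hαa αb
  have e2 : ctr nb (αa * αb) = ctr nb αa * αb + ((-1 : ℤ) ^ da) • (αa * ctr nb αb) :=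
    ctr_mul_of_mem nb da αa hαa αb
  have hsq : ((-1 : ℤ) ^ (da + 1)) * ((-1 : ℤ) ^ (da + 1)) = 1 := by
    rw [← pow_add]
    exact Even.neg_one_pow ⟨da + 1, by ring⟩
  have hmain : lOne (AddMonoidAlgebra.single na αa * AddMonoidAlgebra.single nb αb) =
      lOne (AddMonoidAlgebra.single na αa) * AddMonoidAlgebra.single nb αb +
        ((-1 : ℤ) ^ da) • (AddMonoidAlgebra.single na αa * lOne (AddMonoidAlgebra.single nb αb)) +
        ((-1 : ℤ) ^ (da + 1)) • snBracket na nb da αa αb := by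
    rw [hmul, lOne_single, lOne_single, lOne_single, AddMonoidAlgebra.single_mul_single,
      AddMonoidAlgebra.single_mul_single, hctr_add, e1, e2, snBracket, smul_smul, hsq, one_smul]
    rw [smul_single_aux, ← AddMonoidAlgebra.single_add, ← AddMonoidAlgebra.single_add]
    congr 1
    abel
  refine ⟨hmain, ?_⟩
  rw [hmain]
  have hkey : ((-1 : ℤ) ^ da) * ((-1 : ℤ) ^ (da + 1)) = -1 := by
    rw [← pow_add]
    have : Odd (da + (da + 1)) := ⟨da, by ring⟩
    exact this.neg_one_pow
  simp only [smul_add, smul_smul, hkey, neg_one_smul]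
  have h2 : ((-1 : ℤ) ^ da) * ((-1 : ℤ) ^ da) = 1 := by
    rw [← pow_add]
    exact Even.neg_one_pow ⟨da, rfl⟩
  rw [h2, one_smul]
  abel
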